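/- (Error bound on the effective Hamiltonian.) Let H be an N×N Hermitian complex matrix and let U := e^{−iHt} with 0 < t ≤ 1/(4‖H‖). Let Ũ be a unitary N×N matrix such that ‖Ũ − U‖ ≤ tε/9 and tε/9 ≤ 1/3 for some ε ≥ 0. Define the matrix logarithm by the convergent series log Ũ := ∑_{k=1}^∞ ((−1)^{k+1}/k)·(Ũ − 𝟙)^k and the effective Hamiltonian H̃ := (i/t)·log Ũ. Then ‖H̃ − H‖ ≤ ε. -/

import Mathlib

set_option maxHeartbeats 1000000
set_option synthInstance.maxHeartbeats 400000

open Matrix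

/-- The spectral norm (largest singular value) of a complex matrix, i.e. the operator norm
induced by the Euclidean norm. -/
noncomputable def specNorm {N : ℕ} (M : Matrix (Fin N) (Fin N) ℂ) : ℝ :=
  ‖Matrix.toEuclideanCLM (𝕜 := ℂ) M‖

/-- The matrix exponential `e^M = ∑_{k ≥ 0} M^k / k!`. -/
noncomputable def mexp {N : ℕ} (M : Matrix (Fin N) (Fin N) ℂ) : Matrix (Fin N) (Fin N) ℂ :=
  ∑' k : ℕ, ((k.factorial : ℂ))⁻¹ • M ^ k

/-- The matrix logarithm `log U = ∑_{k ≥ 1} ((-1)^{k+1} / k) (U - 𝟙)^k`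
(here reindexed by `k ↦ k + 1`). -/
noncomputable def mlog {N : ℕ} (U : Matrix (Fin N) (Fin N) ℂ) : Matrix (Fin N) (Fin N) ℂ :=
  ∑' k : ℕ, ((-1 : ℂ) ^ k / ((k : ℂ) + 1)) • (U - 1) ^ (k + 1)

namespace EffHamAux

/-- The continuous linear map version of `Matrix.toEuclideanCLM`. -/
noncomputable def phiL (N : ℕ) : Matrix (Fin N) (Fin N) ℂ →L[ℂ]
    (EuclideanSpace ℂ (Fin N) →L[ℂ] EuclideanSpace ℂ (Fin N)) :=
  LinearMap.toContinuousLinearMap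
    { toFun := fun M => Matrix.toEuclideanCLM (𝕜 := ℂ) M
      map_add' := fun x y => map_add _ x y
      map_smul' := fun c x => map_smul _ c x }

/-- The continuous linear map version of `(Matrix.toEuclideanCLM).symm`. -/
noncomputable def psiL (N : ℕ) : (EuclideanSpace ℂ (Fin N) →L[ℂ] EuclideanSpace ℂ (Fin N)) →L[ℂ]
    Matrix (Fin N) (Fin N) ℂ :=
  LinearMap.toContinuousLinearMap
    { toFun := fun M => (Matrix.toEuclideanCLM (𝕜 := ℂ)).symm M
      map_add' := fun x y => map_add _ x y
      map_smul' := fun c x => map_smul _ c x }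

lemma phi_tsum {N : ℕ} {f : ℕ → Matrix (Fin N) (Fin N) ℂ}
    (h : Summable fun k => Matrix.toEuclideanCLM (𝕜 := ℂ) (f k)) :
    Matrix.toEuclideanCLM (𝕜 := ℂ) (∑' k, f k) = ∑' k, Matrix.toEuclideanCLM (𝕜 := ℂ) (f k) := by
  have hf : Summable f := by
    have h2 := h.map (psiL N : _ →L[ℂ] _).toLinearMap.toAddMonoidHom (psiL N).continuous
    have he : (⇑(psiL N : _ →L[ℂ] _).toLinearMap.toAddMonoidHom ∘
        fun k => Matrix.toEuclideanCLM (𝕜 := ℂ) (f k)) = f := by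
      funext k
      simp [psiL]
    rwa [he] at h2
  exact (phiL N).map_tsum hf

lemma pow_sub_pow_bound {R : Type*} [NormedRing R] {x y : R} {r : ℝ}
    (hx : ‖x‖ ≤ r) (hy : ‖y‖ ≤ r) (n : ℕ) :
    ‖x ^ (n+1) - y ^ (n+1)‖ ≤ (n+1 : ℝ) * r ^ n * ‖x - y‖ := by
  have hr0 : (0:ℝ) ≤ r := le_trans (norm_nonneg x) hx
  induction n with
  | zero => simpa using le_refl ‖x - y‖
  | succ n ih =>
    have key : x ^ (n+2) - y ^ (n+2) = x ^ (n+1) * (x - y) + (x ^ (n+1) - y ^ (n+1)) * y := by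
      noncomm_ring
    have h1 : ‖x ^ (n+1) * (x - y)‖ ≤ r ^ (n+1) * ‖x - y‖ := by
      calc ‖x ^ (n+1) * (x - y)‖ ≤ ‖x ^ (n+1)‖ * ‖x - y‖ := norm_mul_le _ _
        _ ≤ r ^ (n+1) * ‖x - y‖ := by
            gcongr
            exact (norm_pow_le' x n.succ_pos).trans (pow_le_pow_left₀ (norm_nonneg x) hx _)
    have h2 : ‖(x ^ (n+1) - y ^ (n+1)) * y‖ ≤ ((n+1 : ℝ) * r ^ n * ‖x - y‖) * r := by
      calc ‖(x ^ (n+1) - y ^ (n+1)) * y‖ ≤ ‖x ^ (n+1) - y ^ (n+1)‖ * ‖y‖ := norm_mul_le _ _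
        _ ≤ ((n+1 : ℝ) * r ^ n * ‖x - y‖) * r := by
            apply mul_le_mul ih hy (norm_nonneg y)
            positivity
    calc ‖x ^ (n+2) - y ^ (n+2)‖ ≤ ‖x ^ (n+1) * (x - y)‖ + ‖(x ^ (n+1) - y ^ (n+1)) * y‖ := by
          rw [key]; exact norm_add_le _ _
      _ ≤ r ^ (n+1) * ‖x - y‖ + ((n+1 : ℝ) * r ^ n * ‖x - y‖) * r := add_le_add h1 h2
      _ = (((n+1 : ℕ) : ℝ) + 1) * r ^ (n+1) * ‖x - y‖ := by push_cast; ring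

lemma conj_pow {n : Type*} [Fintype n] [DecidableEq n] {V W M : Matrix n n ℂ}
    (hVW : V * W = 1) (hWV : W * V = 1) (k : ℕ) :
    (V * M * W) ^ k = V * M ^ k * W := by
  have hWV' : ∀ X : Matrix n n ℂ, W * (V * X) = X := fun X => by
    rw [← Matrix.mul_assoc, hWV, Matrix.one_mul]
  induction k with
  | zero => simp [hVW]
  | succ k ih =>
    rw [pow_succ, ih, pow_succ]
    simp only [Matrix.mul_assoc, hWV']

/-- Entrywise logarithm series. -/
lemma hasSum_log_series (z : ℂ) (hz : ‖z‖ < 1) :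
    HasSum (fun k : ℕ => ((-1 : ℂ) ^ k / ((k : ℂ) + 1)) * z ^ (k + 1)) (Complex.log (1 + z)) := by
  have h := Complex.hasSum_taylorSeries_log hz
  have h2 := (hasSum_nat_add_iff' (f := fun n : ℕ => (-1 : ℂ) ^ (n + 1) * z ^ n / n) 1).mpr h
  simp only [Finset.range_one, Finset.sum_singleton] at h2
  norm_num at h2
  convert h2 using 2 with k
  · rfl
  · push_cast
    ring

/-- The eigenvalues of a Hermitian matrix are bounded by the spectral norm. -/
lemma abs_eigenvalue_le {N : ℕ} {H : Matrix (Fin N) (Fin N) ℂ} (hH : H.IsHermitian) (i : Fin N) :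
    |hH.eigenvalues i| ≤ specNorm H := by
  have h1 := hH.mulVec_eigenvectorBasis i
  set x : EuclideanSpace ℂ (Fin N) := hH.eigenvectorBasis i with hx
  have hxn : ‖x‖ = 1 := hH.eigenvectorBasis.orthonormal.1 i
  have happ : Matrix.toEuclideanCLM (𝕜 := ℂ) H x = (hH.eigenvalues i : ℂ) • x := by
    apply (WithLp.equiv 2 (Fin N → ℂ)).injective
    change WithLp.ofLp (p := 2) (Matrix.toEuclideanCLM (𝕜 := ℂ) H x)
      = WithLp.ofLp (p := 2) ((hH.eigenvalues i : ℂ) • x)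
    rw [Matrix.ofLp_toEuclideanCLM]
    simpa using congrArg (fun v => v) h1
  have hb := (Matrix.toEuclideanCLM (𝕜 := ℂ) H).le_opNorm x
  rw [happ, norm_smul, hxn, mul_one, mul_one] at hb
  rw [Complex.norm_real, Real.norm_eq_abs] at hb
  exact hb

/-- The key exact identity: `mlog (mexp (-(i t) • H)) = -(i t) • H` for Hermitian `H` with
`t ‖H‖ ≤ 1/4`. -/
lemma mlog_mexp {N : ℕ} {H : Matrix (Fin N) (Fin N) ℂ} (hH : H.IsHermitian)
    {t : ℝ} (ht : 0 < t) (htH : t * specNorm H ≤ 1 / 4) :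
    mlog (mexp ((-(Complex.I * (t : ℂ))) • H)) = (-(Complex.I * (t : ℂ))) • H := by
  classical
  set c : ℂ := -(Complex.I * (t : ℂ)) with hc
  set V : Matrix (Fin N) (Fin N) ℂ := (hH.eigenvectorUnitary : Matrix (Fin N) (Fin N) ℂ) with hV
  set lam : Fin N → ℝ := hH.eigenvalues with hlamdef
  have hVW : V * Vᴴ = 1 := by
    simpa [Matrix.star_eq_conjTranspose] using
      (Matrix.mem_unitaryGroup_iff.mp hH.eigenvectorUnitary.2)
  have hWV : Vᴴ * V = 1 := by
    simpa [Matrix.star_eq_conjTranspose] using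
      (Matrix.mem_unitaryGroup_iff'.mp hH.eigenvectorUnitary.2)
  have hspec : H = V * Matrix.diagonal (fun i => (lam i : ℂ)) * Vᴴ := by
    exact hH.spectral_theorem
  -- bounds on eigenvalues
  have hlam : ∀ i, |t * lam i| ≤ 1 / 4 := by
    intro i
    rw [abs_mul, abs_of_pos ht]
    calc t * |lam i| ≤ t * specNorm H := by
          have := abs_eigenvalue_le hH i
          gcongr
      _ ≤ 1 / 4 := htH
  -- the conjugated diagonal form of c • H
  have hcH : c • H = V * Matrix.diagonal (fun i => c * (lam i : ℂ)) * Vᴴ := by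
    rw [hspec, ← smul_mul_assoc, ← mul_smul_comm, ← Matrix.diagonal_smul]
    have hfun : (c • fun i => ((lam i : ℂ))) = fun i => c * (lam i : ℂ) := by
      funext i; simp
    rw [hfun]
  -- the exponential
  have hE : mexp (c • H) = V * Matrix.diagonal (fun i => Complex.exp (c * (lam i : ℂ))) * Vᴴ := by
    have h1 : mexp (c • H) = NormedSpace.exp (c • H) := by
      rw [NormedSpace.exp_eq_tsum ℂ]; rfl
    have hVinv : V⁻¹ = Vᴴ := Matrix.inv_eq_left_inv hWV
    have hVunit : IsUnit V := ⟨⟨V, Vᴴ, hVW, hWV⟩, rfl⟩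
    rw [h1, hcH, ← hVinv, Matrix.exp_conj V _ hVunit, hVinv]
    rw [Matrix.exp_diagonal, Pi.exp_def]
    have : (fun i => NormedSpace.exp (c * (lam i : ℂ))) =
        fun i => Complex.exp (c * (lam i : ℂ)) :=
      funext fun i => (congrFun Complex.exp_eq_exp_ℂ (c * (lam i : ℂ))).symm
    rw [this]
  -- the entrywise quantities
  set z : Fin N → ℂ := fun i => Complex.exp (c * (lam i : ℂ)) - 1 with hz
  have hcmu : ∀ i, c * (lam i : ℂ) = Complex.I * (-(t * lam i) : ℝ) := by
    intro i
    push_cast [hc]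
    ring
  have hnormcmu : ∀ i, ‖c * (lam i : ℂ)‖ ≤ 1 / 4 := by
    intro i
    rw [hcmu i, norm_mul, Complex.norm_I, one_mul, Complex.norm_real, Real.norm_eq_abs, abs_neg]
    exact hlam i
  have hzlt : ∀ i, ‖z i‖ < 1 := by
    intro i
    have h1 : ‖Complex.exp (c * (lam i : ℂ)) - 1‖ ≤ 2 * ‖c * (lam i : ℂ)‖ :=
      Complex.norm_exp_sub_one_le (by
        linarith [hnormcmu i])
    have h2 : ‖z i‖ ≤ 2 * ‖c * (lam i : ℂ)‖ := by
      simpa [hz] using h1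
    linarith [hnormcmu i]
  -- the entrywise log sums
  have hlog : ∀ i, HasSum (fun k : ℕ => ((-1 : ℂ) ^ k / ((k : ℂ) + 1)) * z i ^ (k + 1))
      (c * (lam i : ℂ)) := by
    intro i
    have h1 := hasSum_log_series (z i) (hzlt i)
    have h2 : (1 : ℂ) + z i = Complex.exp (c * (lam i : ℂ)) := by
      simp [hz]
    rw [h2] at h1
    have him : (c * (lam i : ℂ)).im = -(t * lam i) := by
      rw [hcmu i]; simp
    have habs := hlam i
    rw [abs_le] at habs
    have hpi := Real.pi_gt_three
    rwa [Complex.log_exp (by rw [him]; linarith [habs.1, habs.2])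
      (by rw [him]; linarith [habs.1, habs.2])] at h1
  -- assemble
  have hEm1 : mexp (c • H) - 1 = V * Matrix.diagonal z * Vᴴ := by
    rw [hE]
    have h1 : (1 : Matrix (Fin N) (Fin N) ℂ) = V * Matrix.diagonal (fun _ => (1:ℂ)) * Vᴴ := by
      rw [Matrix.diagonal_one, Matrix.mul_one, hVW]
    rw [h1]
    rw [← Matrix.sub_mul, ← Matrix.mul_sub, Matrix.diagonal_sub]
  have hterm : ∀ k : ℕ, ((-1 : ℂ) ^ k / ((k : ℂ) + 1)) • (mexp (c • H) - 1) ^ (k + 1)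
      = V * Matrix.diagonal (fun i => ((-1 : ℂ) ^ k / ((k : ℂ) + 1)) * z i ^ (k + 1)) * Vᴴ := by
    intro k
    rw [hEm1, conj_pow hVW hWV, Matrix.diagonal_pow, ← smul_mul_assoc, ← mul_smul_comm,
      ← Matrix.diagonal_smul]
    have hfun : (((-1 : ℂ) ^ k / ((k : ℂ) + 1)) • z ^ (k + 1))
        = fun i => ((-1 : ℂ) ^ k / ((k : ℂ) + 1)) * z i ^ (k + 1) := by
      funext i; simp
    rw [hfun]
  have hgsum : HasSum (fun k : ℕ => fun i => ((-1 : ℂ) ^ k / ((k : ℂ) + 1)) * z i ^ (k + 1))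
      (fun i => c * (lam i : ℂ)) := by
    rw [Pi.hasSum]
    exact hlog
  have hmain : HasSum (fun k : ℕ => V * Matrix.diagonal
        (fun i => ((-1 : ℂ) ^ k / ((k : ℂ) + 1)) * z i ^ (k + 1)) * Vᴴ)
      (V * Matrix.diagonal (fun i => c * (lam i : ℂ)) * Vᴴ) :=
    (hgsum.matrix_diagonal.mul_left V).mul_right Vᴴ
  rw [mlog, tsum_congr hterm, hmain.tsum_eq, ← hcH]

lemma coef_norm (k : ℕ) : ‖((-1 : ℂ) ^ k / ((k : ℂ) + 1))‖ = 1 / ((k : ℝ) + 1) := by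
  rw [norm_div, norm_pow, norm_neg, norm_one, one_pow]
  congr 1
  have h : ((k : ℂ) + 1) = ((k + 1 : ℕ) : ℂ) := by push_cast; ring
  rw [h, Complex.norm_natCast]
  push_cast; ring

lemma coef_norm_le (k : ℕ) : ‖((-1 : ℂ) ^ k / ((k : ℂ) + 1))‖ ≤ 1 := by
  rw [coef_norm]
  rw [div_le_one (by positivity)]
  linarith [Nat.cast_nonneg (α := ℝ) k]

lemma log_series_summable {A : Type*} [NormedRing A] [NormedSpace ℂ A] [CompleteSpace A]
    {x : A} {r : ℝ} (hx : ‖x‖ ≤ r) (hr1 : r < 1) :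
    Summable fun k : ℕ => ((-1 : ℂ) ^ k / ((k : ℂ) + 1)) • x ^ (k + 1) := by
  have hr0 : 0 ≤ r := le_trans (norm_nonneg x) hx
  apply Summable.of_norm
  apply Summable.of_nonneg_of_le (fun k => norm_nonneg _) (fun k => ?_)
    ((summable_geometric_of_lt_one hr0 hr1).mul_left r)
  rw [norm_smul]
  calc ‖((-1 : ℂ) ^ k / ((k : ℂ) + 1))‖ * ‖x ^ (k+1)‖ ≤ 1 * r ^ (k+1) := by
        apply mul_le_mul (coef_norm_le k) ?_ (norm_nonneg _) zero_le_one
        exact (norm_pow_le' x k.succ_pos).trans (pow_le_pow_left₀ (norm_nonneg x) hx _)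
    _ = r * r ^ k := by ring

lemma phi_mlog {N : ℕ} {U : Matrix (Fin N) (Fin N) ℂ} {r : ℝ}
    (hU : ‖Matrix.toEuclideanCLM (𝕜 := ℂ) U - 1‖ ≤ r) (hr1 : r < 1) :
    Matrix.toEuclideanCLM (𝕜 := ℂ) (mlog U)
      = ∑' k : ℕ, ((-1 : ℂ) ^ k / ((k : ℂ) + 1)) •
          (Matrix.toEuclideanCLM (𝕜 := ℂ) U - 1) ^ (k + 1) := by
  have hfk : ∀ k : ℕ, Matrix.toEuclideanCLM (𝕜 := ℂ) (((-1 : ℂ) ^ k / ((k : ℂ) + 1)) • (U - 1) ^ (k+1))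
      = ((-1 : ℂ) ^ k / ((k : ℂ) + 1)) • (Matrix.toEuclideanCLM (𝕜 := ℂ) U - 1) ^ (k+1) := by
    intro k
    rw [_root_.map_smul, map_pow, map_sub, _root_.map_one]
  rw [mlog, phi_tsum (by
    simp only [hfk]
    exact log_series_summable hU hr1)]
  exact tsum_congr hfk

lemma norm_phi_mexp_sub_one {N : ℕ} {M : Matrix (Fin N) (Fin N) ℂ}
    (hM : specNorm M ≤ 1 / 4) :
    ‖Matrix.toEuclideanCLM (𝕜 := ℂ) (mexp M) - 1‖ ≤ 1 / 3 := by
  set x := Matrix.toEuclideanCLM (𝕜 := ℂ) M with hx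
  have hxn : ‖x‖ ≤ 1 / 4 := hM
  have hfk : ∀ k : ℕ, Matrix.toEuclideanCLM (𝕜 := ℂ) (((k.factorial : ℂ))⁻¹ • M ^ k)
      = ((k.factorial : ℂ))⁻¹ • x ^ k := by
    intro k
    rw [_root_.map_smul, map_pow]
  have hsum : Summable fun k : ℕ => ((k.factorial : ℂ))⁻¹ • x ^ k :=
    NormedSpace.expSeries_summable' (𝕂 := ℂ) x
  have h1 : Matrix.toEuclideanCLM (𝕜 := ℂ) (mexp M) = ∑' k : ℕ, ((k.factorial : ℂ))⁻¹ • x ^ k := by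
    rw [mexp, phi_tsum (by simp only [hfk]; exact hsum)]
    exact tsum_congr hfk
  have h0 : (∑' k : ℕ, ((k.factorial : ℂ))⁻¹ • x ^ k)
      = 1 + ∑' k : ℕ, (((k+1).factorial : ℂ))⁻¹ • x ^ (k+1) := by
    rw [hsum.tsum_eq_zero_add]
    norm_num
  rw [h1, h0, add_sub_cancel_left]
  have hgeom : HasSum (fun k : ℕ => (1/4 : ℝ) * (1/4) ^ k) ((1/4) * (1 - 1/4)⁻¹) :=
    (hasSum_geometric_of_lt_one (by norm_num) (by norm_num)).mul_left _
  have h3 : ((1/4 : ℝ) * (1 - 1/4)⁻¹) = 1/3 := by norm_num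
  rw [h3] at hgeom
  apply tsum_of_norm_bounded hgeom
  intro k
  rw [norm_smul (β := (EuclideanSpace ℂ (Fin N) →L[ℂ] EuclideanSpace ℂ (Fin N))) (((k+1).factorial : ℂ))⁻¹]
  have h2 : ‖(((k+1).factorial : ℕ) : ℂ)⁻¹‖ ≤ 1 := by
    rw [norm_inv, Complex.norm_natCast]
    have h4 : (1 : ℝ) ≤ ((k+1).factorial : ℝ) := by
      exact_mod_cast Nat.one_le_iff_ne_zero.mpr (k+1).factorial_ne_zero
    exact inv_le_one_of_one_le₀ h4
  have h5 : ‖x ^ (k+1)‖ ≤ (1/4 : ℝ) ^ (k+1) :=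
    (norm_pow_le' x k.succ_pos).trans (pow_le_pow_left₀ (norm_nonneg x) hxn _)
  calc ‖(((k+1).factorial : ℂ))⁻¹‖ * ‖x ^ (k+1)‖ ≤ 1 * (1/4 : ℝ) ^ (k+1) := by
        exact mul_le_mul h2 h5 (norm_nonneg _) zero_le_one
    _ = (1/4 : ℝ) * (1/4) ^ k := by ring

end EffHamAux

theorem effective_hamiltonian_error {N : ℕ}
    (H : Matrix (Fin N) (Fin N) ℂ) (hH : H.IsHermitian)
    (t ε : ℝ) (ht : 0 < t) (htH : t * specNorm H ≤ 1 / 4) (hε : 0 ≤ ε)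
    (Ut : Matrix (Fin N) (Fin N) ℂ) (hUt : Utᴴ * Ut = 1)
    (hclose : specNorm (Ut - mexp ((-(Complex.I * (t : ℂ))) • H)) ≤ t * ε / 9)
    (hsmall : t * ε / 9 ≤ 1 / 3) :
    specNorm ((Complex.I / (t : ℂ)) • mlog Ut - H) ≤ ε := by
  set c : ℂ := -(Complex.I * (t : ℂ)) with hc
  set aH := Matrix.toEuclideanCLM (𝕜 := ℂ) H with haH
  set u := Matrix.toEuclideanCLM (𝕜 := ℂ) Ut with hu
  set e := Matrix.toEuclideanCLM (𝕜 := ℂ) (mexp (c • H)) with he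
  have hcnorm : ‖c‖ = t := by
    rw [hc, norm_neg, norm_mul, Complex.norm_I, one_mul, Complex.norm_real, Real.norm_eq_abs,
      abs_of_pos ht]
  have hsm : specNorm (c • H) ≤ 1 / 4 := by
    show ‖Matrix.toEuclideanCLM (𝕜 := ℂ) (c • H)‖ ≤ 1 / 4
    rw [_root_.map_smul, norm_smul (β := (EuclideanSpace ℂ (Fin N) →L[ℂ] EuclideanSpace ℂ (Fin N))) c, hcnorm]
    exact htH
  have he1 : ‖e - 1‖ ≤ 1 / 3 := EffHamAux.norm_phi_mexp_sub_one hsm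
  have hue : ‖u - e‖ ≤ t * ε / 9 := by
    have h := hclose
    simp only [specNorm, map_sub] at h
    exact h
  have hu1 : ‖u - 1‖ ≤ 2 / 3 := by
    calc ‖u - 1‖ = ‖(u - e) + (e - 1)‖ := by rw [sub_add_sub_cancel]
      _ ≤ ‖u - e‖ + ‖e - 1‖ := norm_add_le _ _
      _ ≤ 2 / 3 := by linarith
  have he1' : ‖e - 1‖ ≤ 2 / 3 := le_trans he1 (by norm_num)
  have hsum1 : Summable fun k : ℕ => ((-1 : ℂ) ^ k / ((k : ℂ) + 1)) • (u - 1) ^ (k + 1) :=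
    EffHamAux.log_series_summable hu1 (by norm_num)
  have hsum2 : Summable fun k : ℕ => ((-1 : ℂ) ^ k / ((k : ℂ) + 1)) • (e - 1) ^ (k + 1) :=
    EffHamAux.log_series_summable he1' (by norm_num)
  have hlogu : Matrix.toEuclideanCLM (𝕜 := ℂ) (mlog Ut)
      = ∑' k : ℕ, ((-1 : ℂ) ^ k / ((k : ℂ) + 1)) • (u - 1) ^ (k + 1) :=
    EffHamAux.phi_mlog hu1 (by norm_num)
  have hlogE : Matrix.toEuclideanCLM (𝕜 := ℂ) (mlog (mexp (c • H)))
      = ∑' k : ℕ, ((-1 : ℂ) ^ k / ((k : ℂ) + 1)) • (e - 1) ^ (k + 1) :=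
    EffHamAux.phi_mlog he1' (by norm_num)
  have hml : mlog (mexp (c • H)) = c • H := by
    rw [hc]
    exact EffHamAux.mlog_mexp hH ht htH
  have hkey : (∑' k : ℕ, ((-1 : ℂ) ^ k / ((k : ℂ) + 1)) • (e - 1) ^ (k + 1)) = c • aH := by
    rw [← hlogE, hml, _root_.map_smul]
  have hdiff : ‖(∑' k : ℕ, ((-1 : ℂ) ^ k / ((k : ℂ) + 1)) • (u - 1) ^ (k + 1))
      - (∑' k : ℕ, ((-1 : ℂ) ^ k / ((k : ℂ) + 1)) • (e - 1) ^ (k + 1))‖ ≤ 3 * (t * ε / 9) := by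
    rw [← hsum1.tsum_sub hsum2]
    have hgeom : HasSum (fun k : ℕ => (t * ε / 9) * (2/3 : ℝ) ^ k) ((t * ε / 9) * (1 - 2/3)⁻¹) :=
      (hasSum_geometric_of_lt_one (by norm_num) (by norm_num)).mul_left _
    have h3 : ((t * ε / 9) * ((1 : ℝ) - 2/3)⁻¹) = 3 * (t * ε / 9) := by norm_num; ring
    rw [h3] at hgeom
    apply tsum_of_norm_bounded hgeom
    intro k
    have hps := EffHamAux.pow_sub_pow_bound (x := u - 1) (y := e - 1) (r := 2/3) hu1 he1' k
    have hxy : (u - 1) - (e - 1) = u - e := sub_sub_sub_cancel_right u e 1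
    rw [hxy] at hps
    have hss : ((-1 : ℂ) ^ k / ((k : ℂ) + 1)) • (u - 1) ^ (k + 1)
        - ((-1 : ℂ) ^ k / ((k : ℂ) + 1)) • (e - 1) ^ (k + 1)
        = ((-1 : ℂ) ^ k / ((k : ℂ) + 1)) • ((u - 1) ^ (k + 1) - (e - 1) ^ (k + 1)) :=
      (smul_sub _ _ _).symm
    rw [hss, norm_smul (β := (EuclideanSpace ℂ (Fin N) →L[ℂ] EuclideanSpace ℂ (Fin N))) ((-1 : ℂ) ^ k / ((k : ℂ) + 1)), EffHamAux.coef_norm]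
    calc (1 / ((k : ℝ) + 1)) * ‖(u - 1) ^ (k+1) - (e - 1) ^ (k+1)‖
        ≤ (1 / ((k : ℝ) + 1)) * (((k : ℝ) + 1) * (2/3) ^ k * ‖u - e‖) := by
          apply mul_le_mul_of_nonneg_left hps
          positivity
      _ = (2/3) ^ k * ‖u - e‖ := by
          have hk : ((k : ℝ) + 1) ≠ 0 := by positivity
          field_simp
      _ ≤ (2/3) ^ k * (t * ε / 9) := by
          apply mul_le_mul_of_nonneg_left hue
          positivity
      _ = (t * ε / 9) * (2/3) ^ k := by ring
  have hIt : ‖(Complex.I / (t : ℂ))‖ = 1 / t := by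
    rw [norm_div, Complex.norm_I, Complex.norm_real, Real.norm_eq_abs, abs_of_pos ht]
  have hItc : (Complex.I / (t : ℂ)) * c = 1 := by
    rw [hc]
    have ht0 : (t : ℂ) ≠ 0 := Complex.ofReal_ne_zero.mpr ht.ne'
    field_simp
    linear_combination (-1 : ℂ) * Complex.I_mul_I
  have hfin : Matrix.toEuclideanCLM (𝕜 := ℂ) ((Complex.I / (t : ℂ)) • mlog Ut - H)
      = (Complex.I / (t : ℂ)) •
        ((∑' k : ℕ, ((-1 : ℂ) ^ k / ((k : ℂ) + 1)) • (u - 1) ^ (k + 1))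
          - (∑' k : ℕ, ((-1 : ℂ) ^ k / ((k : ℂ) + 1)) • (e - 1) ^ (k + 1))) := by
    rw [map_sub, _root_.map_smul, hlogu, smul_sub, hkey, smul_smul, hItc, one_smul]
  show ‖Matrix.toEuclideanCLM (𝕜 := ℂ) ((Complex.I / (t : ℂ)) • mlog Ut - H)‖ ≤ ε
  rw [hfin, norm_smul (β := (EuclideanSpace ℂ (Fin N) →L[ℂ] EuclideanSpace ℂ (Fin N))) (Complex.I / (t : ℂ)), hIt]
  calc (1 / t) * ‖_ - _‖ ≤ (1 / t) * (3 * (t * ε / 9)) := by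
        apply mul_le_mul_of_nonneg_left hdiff
        positivity
    _ = ε / 3 := by field_simp; ring
    _ ≤ ε := by linarith
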